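/- Let (X, 𝒳, μ) be a σ-finite measure space, {φ_t}_{t∈ℝ} a measurable nonsingular flow on X (each φ_t is invertible with inverse φ_{−t}), and {A_t}_{t∈ℝ} a jointly measurable cocycle for the flow taking values in ℝ∖{0}. Let δ : ℝ × X → ℝ be jointly measurable and suppose: (i) for every s, t ∈ ℝ, δ(s+t, x) = δ(s, x) + A_s(x) δ(t, φ_s(x)) for μ-a.e. x ∈ X; and (ii) for Lebesgue-a.e. t ∈ ℝ, δ(t, x) = 0 for μ-a.e. x ∈ X. Then for every r ∈ ℝ, δ(r, x) = 0 for μ-a.e. x ∈ X. -/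
import Mathlib

open MeasureTheory

/-- if `δ` is jointly measurable, satisfies the almost semi-additivity
relation `δ(s+t,·) = δ(s,·) + A_s(·) δ(t, φ_s(·))` μ-a.e. for every `s, t ∈ ℝ`, and
`δ(t,·) = 0` μ-a.e. for Lebesgue-a.e. `t`, then `δ(r,·) = 0` μ-a.e. for every `r ∈ ℝ`. -/
theorem stmt8 {X : Type*} [MeasurableSpace X] (μ : Measure X) [SigmaFinite μ]
    (φ : ℝ → X → X)
    (hφ_add : ∀ (t1 t2 : ℝ) (x : X), φ (t1 + t2) x = φ t1 (φ t2 x))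
    (hφ_zero : ∀ x : X, φ 0 x = x)
    (hφ_meas : Measurable (fun p : ℝ × X => φ p.1 p.2))
    (hφ_ns : ∀ (t : ℝ) (s : Set X), MeasurableSet s → μ s = 0 → μ (φ t ⁻¹' s) = 0)
    (A : ℝ → X → ℝ)
    (hA_meas : Measurable (fun p : ℝ × X => A p.1 p.2))
    (hA_ne : ∀ (t : ℝ) (x : X), A t x ≠ 0)
    (hA : ∀ (t1 t2 : ℝ) (x : X), A (t1 + t2) x = A t1 x * A t2 (φ t1 x))
    (δ : ℝ → X → ℝ)
    (hδ_meas : Measurable (fun p : ℝ × X => δ p.1 p.2))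
    (hi : ∀ s t : ℝ, ∀ᵐ x ∂μ, δ (s + t) x = δ s x + A s x * δ t (φ s x))
    (hii : ∀ᵐ t ∂(volume : Measure ℝ), ∀ᵐ x ∂μ, δ t x = 0) :
    ∀ r : ℝ, ∀ᵐ x ∂μ, δ r x = 0 := by
  intro r
  have hsub : ∀ᵐ s ∂(volume : Measure ℝ), ∀ᵐ x ∂μ, δ (r - s) x = 0 :=
    (MeasureTheory.quasiMeasurePreserving_sub_left_of_right_invariant (volume : Measure ℝ) r).ae hii
  obtain ⟨s, hs1, hs2⟩ := (hii.and hsub).exists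
  have hN : μ {y | δ (r - s) y ≠ 0} = 0 := hs2
  have hNm : MeasurableSet {y | δ (r - s) y ≠ 0} := by
    have : Measurable fun y => δ (r - s) y := hδ_meas.comp (measurable_prodMk_left)
    exact (this (measurableSet_singleton 0)).compl
  have hpre : μ (φ s ⁻¹' {y | δ (r - s) y ≠ 0}) = 0 := hφ_ns s _ hNm hN
  have hcomp : ∀ᵐ x ∂μ, δ (r - s) (φ s x) = 0 := by
    rw [ae_iff]
    exact hpre
  have hkey := hi s (r - s)
  filter_upwards [hkey, hs1, hcomp] with x h1 h2 h3
  have : s + (r - s) = r := by ring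
  rw [this] at h1
  rw [h1, h2, h3]
  ring
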